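/- Let 0 < s < 1, b > 0, q > 0, and define the Mhaskar–Saff functional F_s(a) = (Γ(1+s)/(2^s Γ((1+s)/2)))·a^{−s}·g(a) where g(a) = Γ((1−s)/2) − q(√π/Γ(1+s/2))(a/√(a²+b²))^s ₂F₁(s/2,(1+s)/2;1+s/2; a²/(a²+b²)). Then lim_{a→0⁺} F_s(a) = +∞ and lim_{a→+∞} F_s(a) = 0. -/

import Mathlib

open Real Set Filter

/-- The Gauss hypergeometric function `₂F₁(α, β; γ; x)` as a power series sum. -/
noncomputable def twoF1 (α β γ x : ℝ) : ℝ :=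
  ∑' k : ℕ, ((ascPochhammer ℝ k).eval α * (ascPochhammer ℝ k).eval β /
      ((ascPochhammer ℝ k).eval γ * (Nat.factorial k))) * x ^ k

/-- The Mhaskar–Saff functional `F_s(a)` for the interval `[−a,a]`. -/
noncomputable def MSfunctional (s q b a : ℝ) : ℝ :=
  (Real.Gamma (1 + s) / (2 ^ s * Real.Gamma ((1 + s) / 2))) * a ^ (-s) *
    (Real.Gamma ((1 - s) / 2) -
      q * (Real.sqrt Real.pi / Real.Gamma (1 + s / 2)) *
        (a / Real.sqrt (a ^ 2 + b ^ 2)) ^ s *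
        twoF1 (s / 2) ((1 + s) / 2) (1 + s / 2) (a ^ 2 / (a ^ 2 + b ^ 2)))

namespace MSaux

/-- Coefficients of the relevant hypergeometric series. -/
noncomputable def hgCoef (s : ℝ) (k : ℕ) : ℝ :=
  (ascPochhammer ℝ k).eval (s / 2) * (ascPochhammer ℝ k).eval ((1 + s) / 2) /
      ((ascPochhammer ℝ k).eval (1 + s / 2) * (Nat.factorial k))

lemma twoF1_eq (s x : ℝ) :
    twoF1 (s / 2) ((1 + s) / 2) (1 + s / 2) x = ∑' k : ℕ, hgCoef s k * x ^ k := rfl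

lemma hgCoef_pos {s : ℝ} (hs0 : 0 < s) (k : ℕ) : 0 < hgCoef s k := by
  apply div_pos
  · exact mul_pos (ascPochhammer_pos _ _ (by linarith)) (ascPochhammer_pos _ _ (by linarith))
  · exact mul_pos (ascPochhammer_pos _ _ (by linarith))
      (by exact_mod_cast k.factorial_pos)

lemma hgCoef_succ {s : ℝ} (hs0 : 0 < s) (k : ℕ) :
    hgCoef s (k + 1) =
      hgCoef s k * (((s / 2 + k) * ((1 + s) / 2 + k)) / ((1 + s / 2 + k) * (k + 1))) := by
  have hγ : (ascPochhammer ℝ k).eval (1 + s / 2) ≠ 0 :=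
    (ascPochhammer_pos _ _ (by linarith)).ne'
  have hfac : ((Nat.factorial k : ℝ)) ≠ 0 := by exact_mod_cast k.factorial_ne_zero
  have hγk : (1 + s / 2 + (k : ℝ)) ≠ 0 := by positivity
  have hk1 : ((k : ℝ) + 1) ≠ 0 := by positivity
  unfold hgCoef
  rw [ascPochhammer_succ_eval, ascPochhammer_succ_eval, ascPochhammer_succ_eval,
    Nat.factorial_succ]
  push_cast
  field_simp

lemma hgCoef_key {s : ℝ} (hs0 : 0 < s) (hs1 : s < 1) (k : ℕ) :
    hgCoef s k * ((1 - s) / 6) ≤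
      hgCoef s k * ((k : ℝ) + 2) - hgCoef s (k + 1) * ((k : ℝ) + 3) := by
  have hc := hgCoef_pos hs0 k
  have hn : (0 : ℝ) ≤ (k : ℝ) := Nat.cast_nonneg k
  have hY : (0 : ℝ) < (1 + s / 2 + (k : ℝ)) * ((k : ℝ) + 1) := by positivity
  rw [hgCoef_succ hs0 k]
  have hineq : (1 - s) / 6 ≤
      ((k : ℝ) + 2) - ((s / 2 + k) * ((1 + s) / 2 + k)) / ((1 + s / 2 + k) * (k + 1)) *
        ((k : ℝ) + 3) := by
    rw [le_sub_iff_add_le, add_comm, ← le_sub_iff_add_le, div_mul_eq_mul_div,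
      div_le_iff₀ hY]
    nlinarith [mul_nonneg hn hn, mul_nonneg (mul_nonneg hn hn) hn,
      mul_nonneg hn hs0.le, mul_nonneg (mul_nonneg hn hn) hs0.le,
      mul_nonneg hn (mul_nonneg hs0.le hs0.le), mul_pos hs0 hs0]
  calc hgCoef s k * ((1 - s) / 6)
      ≤ hgCoef s k * (((k : ℝ) + 2) -
          ((s / 2 + k) * ((1 + s) / 2 + k)) / ((1 + s / 2 + k) * (k + 1)) * ((k : ℝ) + 3)) :=
        mul_le_mul_of_nonneg_left hineq hc.le
    _ = hgCoef s k * ((k : ℝ) + 2) -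
          hgCoef s k * (((s / 2 + k) * ((1 + s) / 2 + k)) / ((1 + s / 2 + k) * (k + 1))) *
            ((k : ℝ) + 3) := by ring

lemma summable_hgCoef {s : ℝ} (hs0 : 0 < s) (hs1 : s < 1) : Summable (hgCoef s) := by
  have ht : (0 : ℝ) < (1 - s) / 6 := by linarith
  apply summable_of_sum_range_le (c := 6 / (1 - s) * (hgCoef s 0 * 2))
    (fun k => (hgCoef_pos hs0 k).le)
  intro n
  have key : ∀ k ∈ Finset.range n, hgCoef s k ≤
      6 / (1 - s) * (hgCoef s k * ((k : ℝ) + 2) - hgCoef s (k + 1) * ((k + 1 : ℕ) + 2 : ℝ)) := by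
    intro k _
    have h := hgCoef_key hs0 hs1 k
    have h61 : 6 / (1 - s) * ((1 - s) / 6) = 1 := by
      rw [div_mul_div_comm, mul_comm (1 - s) 6]
      exact div_self (mul_ne_zero (by norm_num) (by linarith))
    have h2 : hgCoef s k ≤ 6 / (1 - s) * (hgCoef s k * ((1 - s) / 6)) := by
      rw [show 6 / (1 - s) * (hgCoef s k * ((1 - s) / 6)) =
        hgCoef s k * (6 / (1 - s) * ((1 - s) / 6)) by ring, h61, mul_one]
    refine h2.trans ?_
    apply mul_le_mul_of_nonneg_left _ (le_of_lt (div_pos (by norm_num) (by linarith)))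
    push_cast
    convert h using 2
    · rfl
    · ring
  calc ∑ k ∈ Finset.range n, hgCoef s k
      ≤ ∑ k ∈ Finset.range n, 6 / (1 - s) *
          (hgCoef s k * ((k : ℝ) + 2) - hgCoef s (k + 1) * ((k + 1 : ℕ) + 2 : ℝ)) :=
        Finset.sum_le_sum key
    _ = 6 / (1 - s) * ∑ k ∈ Finset.range n,
          ((fun m : ℕ => hgCoef s m * ((m : ℝ) + 2)) k -
           (fun m : ℕ => hgCoef s m * ((m : ℝ) + 2)) (k + 1)) := by
        rw [Finset.mul_sum]
    _ = 6 / (1 - s) * (hgCoef s 0 * ((0 : ℝ) + 2) - hgCoef s n * ((n : ℝ) + 2)) := by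
        rw [Finset.sum_range_sub' (fun m : ℕ => hgCoef s m * ((m : ℝ) + 2)) n]
        norm_num
    _ ≤ 6 / (1 - s) * (hgCoef s 0 * 2) := by
        apply mul_le_mul_of_nonneg_left _ (le_of_lt (div_pos (by norm_num) (by linarith)))
        have := (hgCoef_pos hs0 n).le
        have hn : (0 : ℝ) ≤ (n : ℝ) := Nat.cast_nonneg n
        nlinarith

lemma summable_hg_x {s x : ℝ} (hs0 : 0 < s) (hs1 : s < 1) (hx0 : 0 ≤ x) (hx1 : x ≤ 1) :
    Summable (fun k : ℕ => hgCoef s k * x ^ k) := by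
  apply Summable.of_nonneg_of_le
    (fun k => mul_nonneg (hgCoef_pos hs0 k).le (pow_nonneg hx0 k))
    (fun k => ?_) (summable_hgCoef hs0 hs1)
  calc hgCoef s k * x ^ k ≤ hgCoef s k * 1 := by
        apply mul_le_mul_of_nonneg_left (pow_le_one₀ hx0 hx1) (hgCoef_pos hs0 k).le
    _ = hgCoef s k := mul_one _

lemma twoF1_nonneg {s x : ℝ} (hs0 : 0 < s) (hx0 : 0 ≤ x) :
    0 ≤ twoF1 (s / 2) ((1 + s) / 2) (1 + s / 2) x := by
  rw [twoF1_eq]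
  exact tsum_nonneg fun k => mul_nonneg (hgCoef_pos hs0 k).le (pow_nonneg hx0 k)

lemma twoF1_le {s x : ℝ} (hs0 : 0 < s) (hs1 : s < 1) (hx0 : 0 ≤ x) (hx1 : x ≤ 1) :
    twoF1 (s / 2) ((1 + s) / 2) (1 + s / 2) x ≤ ∑' k : ℕ, hgCoef s k := by
  rw [twoF1_eq]
  apply Summable.tsum_le_tsum _ (summable_hg_x hs0 hs1 hx0 hx1) (summable_hgCoef hs0 hs1)
  intro k
  calc hgCoef s k * x ^ k ≤ hgCoef s k * 1 :=
        mul_le_mul_of_nonneg_left (pow_le_one₀ hx0 hx1) (hgCoef_pos hs0 k).le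
    _ = hgCoef s k := mul_one _

end MSaux

open MSaux in
/-- `F_s(a) → +∞` as `a → 0⁺` and `F_s(a) → 0` as `a → ∞`. -/
theorem MSfunctional_limits (s q b : ℝ) (hs0 : 0 < s) (hs1 : s < 1) (hq : 0 < q) (hb : 0 < b) :
    Tendsto (MSfunctional s q b) (nhdsWithin 0 (Ioi 0)) atTop ∧
    Tendsto (MSfunctional s q b) atTop (nhds 0) := by
  set C : ℝ := Real.Gamma (1 + s) / (2 ^ s * Real.Gamma ((1 + s) / 2)) with hCdef
  set Γ2 : ℝ := Real.Gamma ((1 - s) / 2) with hΓ2def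
  set D : ℝ := Real.sqrt Real.pi / Real.Gamma (1 + s / 2) with hDdef
  set M : ℝ := ∑' k : ℕ, hgCoef s k with hMdef
  have hC : 0 < C := by
    apply div_pos (Real.Gamma_pos_of_pos (by linarith))
    exact mul_pos (Real.rpow_pos_of_pos two_pos s) (Real.Gamma_pos_of_pos (by linarith))
  have hΓ2 : 0 < Γ2 := Real.Gamma_pos_of_pos (by linarith)
  have hD : 0 < D := div_pos (Real.sqrt_pos.2 Real.pi_pos) (Real.Gamma_pos_of_pos (by linarith))
  have hM : 0 < M := (hgCoef_pos hs0 0).trans_le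
    (Summable.le_tsum (summable_hgCoef hs0 hs1) 0 (fun k _ => (hgCoef_pos hs0 k).le))
  -- basic facts for a > 0
  have hfacts : ∀ a : ℝ, 0 < a →
      MSfunctional s q b a = C * a ^ (-s) * (Γ2 - q * D * (a / Real.sqrt (a ^ 2 + b ^ 2)) ^ s *
        twoF1 (s / 2) ((1 + s) / 2) (1 + s / 2) (a ^ 2 / (a ^ 2 + b ^ 2))) := by
    intro a ha; rfl
  have hT : ∀ a : ℝ, 0 < a →
      0 ≤ q * D * (a / Real.sqrt (a ^ 2 + b ^ 2)) ^ s *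
          twoF1 (s / 2) ((1 + s) / 2) (1 + s / 2) (a ^ 2 / (a ^ 2 + b ^ 2)) ∧
      q * D * (a / Real.sqrt (a ^ 2 + b ^ 2)) ^ s *
          twoF1 (s / 2) ((1 + s) / 2) (1 + s / 2) (a ^ 2 / (a ^ 2 + b ^ 2)) ≤ q * D * M ∧
      q * D * (a / Real.sqrt (a ^ 2 + b ^ 2)) ^ s *
          twoF1 (s / 2) ((1 + s) / 2) (1 + s / 2) (a ^ 2 / (a ^ 2 + b ^ 2)) ≤
        q * D * M * (a / b) ^ s := by
    intro a ha
    have hsq : 0 < Real.sqrt (a ^ 2 + b ^ 2) := Real.sqrt_pos.2 (by positivity)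
    have hsqsq : Real.sqrt (a ^ 2 + b ^ 2) ^ 2 = a ^ 2 + b ^ 2 :=
      Real.sq_sqrt (by positivity)
    have hsb : b ≤ Real.sqrt (a ^ 2 + b ^ 2) := by nlinarith [Real.sqrt_nonneg (a ^ 2 + b ^ 2)]
    have hsa : a ≤ Real.sqrt (a ^ 2 + b ^ 2) := by nlinarith [Real.sqrt_nonneg (a ^ 2 + b ^ 2)]
    have hr0 : 0 ≤ a / Real.sqrt (a ^ 2 + b ^ 2) := by positivity
    have hr1 : a / Real.sqrt (a ^ 2 + b ^ 2) ≤ 1 := (div_le_one hsq).2 hsa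
    have hrb : a / Real.sqrt (a ^ 2 + b ^ 2) ≤ a / b := by gcongr
    have hx0 : 0 ≤ a ^ 2 / (a ^ 2 + b ^ 2) := by positivity
    have hx1 : a ^ 2 / (a ^ 2 + b ^ 2) ≤ 1 := by
      rw [div_le_one (by positivity)]; nlinarith
    have hH0 := twoF1_nonneg (x := a ^ 2 / (a ^ 2 + b ^ 2)) hs0 hx0
    have hHM := twoF1_le (x := a ^ 2 / (a ^ 2 + b ^ 2)) hs0 hs1 hx0 hx1
    have hrs0 : 0 ≤ (a / Real.sqrt (a ^ 2 + b ^ 2)) ^ s := Real.rpow_nonneg hr0 s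
    have hrs1 : (a / Real.sqrt (a ^ 2 + b ^ 2)) ^ s ≤ 1 := Real.rpow_le_one hr0 hr1 hs0.le
    have hrsb : (a / Real.sqrt (a ^ 2 + b ^ 2)) ^ s ≤ (a / b) ^ s :=
      Real.rpow_le_rpow hr0 hrb hs0.le
    refine ⟨by positivity, ?_, ?_⟩
    · calc q * D * (a / Real.sqrt (a ^ 2 + b ^ 2)) ^ s *
            twoF1 (s / 2) ((1 + s) / 2) (1 + s / 2) (a ^ 2 / (a ^ 2 + b ^ 2))
          ≤ q * D * 1 * M := by
            apply mul_le_mul (by apply mul_le_mul_of_nonneg_left hrs1 (by positivity)) hHM hH0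
              (by positivity)
        _ = q * D * M := by ring
    · calc q * D * (a / Real.sqrt (a ^ 2 + b ^ 2)) ^ s *
            twoF1 (s / 2) ((1 + s) / 2) (1 + s / 2) (a ^ 2 / (a ^ 2 + b ^ 2))
          ≤ q * D * (a / b) ^ s * M := by
            apply mul_le_mul (by apply mul_le_mul_of_nonneg_left hrsb (by positivity)) hHM hH0
              (by positivity)
        _ = q * D * M * (a / b) ^ s := by ring
  constructor
  · -- a → 0⁺
    have hlow : ∀ᶠ a in nhdsWithin (0 : ℝ) (Ioi 0),
        C * Γ2 * a ^ (-s) - C * (q * D * M) * b ^ (-s) ≤ MSfunctional s q b a := by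
      filter_upwards [self_mem_nhdsWithin] with a ha
      have ha : (0 : ℝ) < a := ha
      obtain ⟨hT0, -, hTb⟩ := hT a ha
      rw [hfacts a ha]
      have hrw : a ^ (-s) * (a / b) ^ s = b ^ (-s) := by
        rw [Real.div_rpow ha.le hb.le, Real.rpow_neg ha.le, Real.rpow_neg hb.le]
        field_simp
      have has : 0 ≤ a ^ (-s) := Real.rpow_nonneg ha.le _
      calc C * Γ2 * a ^ (-s) - C * (q * D * M) * b ^ (-s)
          = C * a ^ (-s) * Γ2 - C * (q * D * M * (a ^ (-s) * (a / b) ^ s)) := by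
            rw [hrw]; ring
        _ ≤ C * a ^ (-s) * Γ2 - C * (a ^ (-s) *
              (q * D * (a / Real.sqrt (a ^ 2 + b ^ 2)) ^ s *
                twoF1 (s / 2) ((1 + s) / 2) (1 + s / 2) (a ^ 2 / (a ^ 2 + b ^ 2)))) := by
            have : a ^ (-s) * (q * D * (a / Real.sqrt (a ^ 2 + b ^ 2)) ^ s *
                twoF1 (s / 2) ((1 + s) / 2) (1 + s / 2) (a ^ 2 / (a ^ 2 + b ^ 2))) ≤
                q * D * M * (a ^ (-s) * (a / b) ^ s) := by
              calc a ^ (-s) * (q * D * (a / Real.sqrt (a ^ 2 + b ^ 2)) ^ s *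
                    twoF1 (s / 2) ((1 + s) / 2) (1 + s / 2) (a ^ 2 / (a ^ 2 + b ^ 2)))
                  ≤ a ^ (-s) * (q * D * M * (a / b) ^ s) :=
                    mul_le_mul_of_nonneg_left hTb has
                _ = q * D * M * (a ^ (-s) * (a / b) ^ s) := by ring
            nlinarith [hC]
        _ = C * a ^ (-s) * (Γ2 - q * D * (a / Real.sqrt (a ^ 2 + b ^ 2)) ^ s *
              twoF1 (s / 2) ((1 + s) / 2) (1 + s / 2) (a ^ 2 / (a ^ 2 + b ^ 2))) := by ring
    have hrinv : Tendsto (fun a : ℝ => a ^ (-s)) (nhdsWithin 0 (Ioi 0)) atTop := by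
      have h1 : Tendsto (fun a : ℝ => a ^ s) (nhdsWithin 0 (Ioi 0)) (nhdsWithin 0 (Ioi 0)) := by
        apply tendsto_nhdsWithin_of_tendsto_nhds_of_eventually_within
        · have := (Real.continuousAt_rpow_const 0 s (Or.inr hs0.le)).tendsto
          rw [Real.zero_rpow hs0.ne'] at this
          exact this.mono_left nhdsWithin_le_nhds
        · filter_upwards [self_mem_nhdsWithin] with a ha
          exact Real.rpow_pos_of_pos ha s
      have h2 := h1.inv_tendsto_nhdsGT_zero
      apply h2.congr'
      filter_upwards [self_mem_nhdsWithin] with a (ha : (0:ℝ) < a)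
      simp [Real.rpow_neg ha.le]
    have hbase : Tendsto (fun a : ℝ => C * Γ2 * a ^ (-s) - C * (q * D * M) * b ^ (-s))
        (nhdsWithin 0 (Ioi 0)) atTop := by
      apply tendsto_atTop_add_const_right
      exact hrinv.const_mul_atTop (by positivity)
    exact tendsto_atTop_mono' _ hlow hbase
  · -- a → ∞
    have habs : ∀ᶠ a in atTop, ‖MSfunctional s q b a‖ ≤ C * (Γ2 + q * D * M) * a ^ (-s) := by
      filter_upwards [eventually_gt_atTop (0 : ℝ)] with a ha
      obtain ⟨hT0, hTM, -⟩ := hT a ha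
      rw [hfacts a ha]
      have has : 0 ≤ a ^ (-s) := Real.rpow_nonneg ha.le _
      rw [Real.norm_eq_abs, abs_mul, abs_of_nonneg (by positivity : (0:ℝ) ≤ C * a ^ (-s))]
      have habs2 : |Γ2 - q * D * (a / Real.sqrt (a ^ 2 + b ^ 2)) ^ s *
          twoF1 (s / 2) ((1 + s) / 2) (1 + s / 2) (a ^ 2 / (a ^ 2 + b ^ 2))| ≤ Γ2 + q * D * M := by
        rw [abs_le]
        constructor <;> nlinarith [mul_pos (mul_pos hq hD) hM]
      calc C * a ^ (-s) * |Γ2 - q * D * (a / Real.sqrt (a ^ 2 + b ^ 2)) ^ s *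
            twoF1 (s / 2) ((1 + s) / 2) (1 + s / 2) (a ^ 2 / (a ^ 2 + b ^ 2))|
          ≤ C * a ^ (-s) * (Γ2 + q * D * M) :=
            mul_le_mul_of_nonneg_left habs2 (by positivity)
        _ = C * (Γ2 + q * D * M) * a ^ (-s) := by ring
    have hg : Tendsto (fun a : ℝ => C * (Γ2 + q * D * M) * a ^ (-s)) atTop (nhds 0) := by
      have := (tendsto_rpow_neg_atTop hs0).const_mul (C * (Γ2 + q * D * M))
      simpa using this
    exact squeeze_zero_norm' habs hg
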